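/- If C = (1, c₂, c₃, c₄, c₅, c₆) is canonical and the subsystem C' = (1, c₂, c₃, c₄, c₅) is noncanonical, then c₆ ≠ 2c₅ − c₄. -/

import Mathlib

open Finset

/-- `x` is a representation of value `v` in the coin system `c 1, …, c n`. -/
def IsRepr (n : ℕ) (c : ℕ → ℕ) (v : ℕ) (x : ℕ → ℕ) : Prop :=
  ∑ i ∈ Finset.Icc 1 n, c i * x i = v

/-- Minimum number of coins over all representations of `v`. -/
noncomputable def opt (n : ℕ) (c : ℕ → ℕ) (v : ℕ) : ℕ :=
  sInf {k | ∃ x : ℕ → ℕ, IsRepr n c v x ∧ ∑ i ∈ Finset.Icc 1 n, x i = k}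

/-- Number of coins used by the greedy algorithm to pay `v`. -/
def grd (n : ℕ) (c : ℕ → ℕ) (v : ℕ) : ℕ :=
  if hv : v = 0 then 0
  else
    let m := ((Finset.Icc 1 n).filter (fun i => c i ≤ v)).sup c
    if hm : 0 < m then grd n c (v - m) + 1 else 0
termination_by v
decreasing_by omega

/-- The system is canonical: greedy is optimal for every positive value. -/
def Canonical (n : ℕ) (c : ℕ → ℕ) : Prop :=
  ∀ v, 0 < v → opt n c v = grd n c v

/-- `w` is a counterexample to the system. -/
def IsCex (n : ℕ) (c : ℕ → ℕ) (w : ℕ) : Prop :=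
  0 < w ∧ opt n c w < grd n c w

/-- `w` is the minimum counterexample to the system. -/
def MinCex (n : ℕ) (c : ℕ → ℕ) (w : ℕ) : Prop :=
  IsCex n c w ∧ ∀ u, IsCex n c u → w ≤ u

/-- A (currency) system: first coin is `1` and coins strictly increase. -/
def IsSystem (n : ℕ) (c : ℕ → ℕ) : Prop :=
  c 1 = 1 ∧ StrictMonoOn c (Set.Icc 1 n)

namespace CoinAux

lemma grd_zero (n : ℕ) (c : ℕ → ℕ) : grd n c 0 = 0 := by rw [grd]; simp

lemma grd_eq (n : ℕ) (c : ℕ → ℕ) (v : ℕ) (hv : v ≠ 0) :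
    grd n c v = (if 0 < ((Finset.Icc 1 n).filter (fun i => c i ≤ v)).sup c
      then grd n c (v - ((Finset.Icc 1 n).filter (fun i => c i ≤ v)).sup c) + 1 else 0) := by
  rw [grd]
  simp only [hv, dite_false, dif_neg]
  split <;> rfl

variable {c : ℕ → ℕ}

lemma sup_eq {n v j : ℕ} (hj : j ∈ Finset.Icc 1 n) (hle : c j ≤ v)
    (hmax : ∀ i ∈ Finset.Icc 1 n, c i ≤ v → c i ≤ c j) :
    ((Finset.Icc 1 n).filter (fun i => c i ≤ v)).sup c = c j := by
  apply le_antisymm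
  · exact Finset.sup_le fun i hi =>
      hmax i (Finset.mem_filter.1 hi).1 (Finset.mem_filter.1 hi).2
  · exact Finset.le_sup (Finset.mem_filter.2 ⟨hj, hle⟩)

lemma grd_step {n v j : ℕ} (hj : j ∈ Finset.Icc 1 n) (hcj : 0 < c j) (hle : c j ≤ v)
    (hmax : ∀ i ∈ Finset.Icc 1 n, c i ≤ v → c i ≤ c j) :
    grd n c v = grd n c (v - c j) + 1 := by
  have hv : v ≠ 0 := by omega
  rw [grd_eq n c v hv, sup_eq hj hle hmax, if_pos hcj]

lemma grd_pos {n v : ℕ} (h1 : c 1 = 1) (hn : 1 ≤ n) (hv : 0 < v) :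
    0 < grd n c v := by
  have h1m : (1 : ℕ) ∈ (Finset.Icc 1 n).filter (fun i => c i ≤ v) :=
    Finset.mem_filter.2 ⟨Finset.mem_Icc.2 ⟨le_refl 1, hn⟩, by omega⟩
  have hsup : 0 < ((Finset.Icc 1 n).filter (fun i => c i ≤ v)).sup c := by
    have := Finset.le_sup (f := c) h1m
    omega
  rw [grd_eq n c v (by omega), if_pos hsup]
  omega

-- sum helper lemmas
lemma sum_mul_update {s : Finset ℕ} {x : ℕ → ℕ} (f : ℕ → ℕ) {j : ℕ} (hj : j ∈ s) (b : ℕ) :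
    ∑ i ∈ s, f i * Function.update x j b i
      = f j * b + ∑ i ∈ s \ {j}, f i * x i := by
  have h : ∀ i ∈ s, f i * Function.update x j b i
      = Function.update (fun i => f i * x i) j (f j * b) i := by
    intro i _
    by_cases hij : i = j
    · subst hij; simp
    · simp [Function.update_of_ne hij]
  rw [Finset.sum_congr rfl h, Finset.sum_update_of_mem hj]

lemma sum_split {s : Finset ℕ} {j : ℕ} (f : ℕ → ℕ) (hj : j ∈ s) :
    ∑ i ∈ s, f i = f j + ∑ i ∈ s \ {j}, f i := by
  rw [Finset.sum_eq_sum_sdiff_singleton_add hj]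
  ring

lemma isRepr_addCoin {n v : ℕ} {x : ℕ → ℕ} (h : IsRepr n c v x) {j : ℕ}
    (hj : j ∈ Finset.Icc 1 n) :
    IsRepr n c (v + c j) (Function.update x j (x j + 1)) ∧
      ∑ i ∈ Finset.Icc 1 n, Function.update x j (x j + 1) i
        = (∑ i ∈ Finset.Icc 1 n, x i) + 1 := by
  unfold IsRepr at *
  constructor
  · rw [sum_mul_update c hj, Nat.mul_add, mul_one]
    have hs := sum_split (fun i => c i * x i) hj
    omega
  · have := sum_mul_update (fun _ => 1) (x := x) hj (x j + 1)
    have h2 := sum_split (f := x) hj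
    simp only [one_mul] at this
    have : ∑ i ∈ Finset.Icc 1 n, Function.update x j (x j + 1) i
        = (x j + 1) + ∑ i ∈ Finset.Icc 1 n \ {j}, x i := by
      simpa using this
    omega

lemma isRepr_remove {n v : ℕ} {x : ℕ → ℕ} (h : IsRepr n c v x) {j : ℕ}
    (hj : j ∈ Finset.Icc 1 n) (hx : 1 ≤ x j) :
    IsRepr n c (v - c j) (Function.update x j (x j - 1)) ∧
      (∑ i ∈ Finset.Icc 1 n, Function.update x j (x j - 1) i)
        = (∑ i ∈ Finset.Icc 1 n, x i) - 1 ∧ c j ≤ v := by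
  unfold IsRepr at *
  have hs := sum_split (fun i => c i * x i) hj
  have hcjv : c j * x j ≤ v := by rw [← h, hs]; omega
  have hcj : c j ≤ c j * x j := Nat.le_mul_of_pos_right _ hx
  refine ⟨?_, ?_, by omega⟩
  · rw [sum_mul_update c hj]
    have hmul : c j * (x j - 1) + c j * 1 = c j * x j := by
      rw [← Nat.mul_add]; congr 1; omega
    omega
  · have h1 := sum_mul_update (fun _ => 1) (x := x) hj (x j - 1)
    simp only [one_mul] at h1
    have h2 := sum_split (f := x) hj
    omega

lemma isRepr_single {n : ℕ} (c : ℕ → ℕ) {j : ℕ} (hj : j ∈ Finset.Icc 1 n) (m : ℕ) :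
    IsRepr n c (c j * m) (fun i => if i = j then m else 0) ∧
      (∑ i ∈ Finset.Icc 1 n, (if i = j then m else 0)) = m := by
  constructor
  · unfold IsRepr
    have : ∀ i ∈ Finset.Icc 1 n, c i * (if i = j then m else 0)
        = if i = j then c j * m else 0 := by
      intro i _; by_cases hij : i = j <;> simp [hij]
    rw [Finset.sum_congr rfl this, Finset.sum_ite_eq' _ j, if_pos hj]
  · rw [Finset.sum_ite_eq' _ j, if_pos hj]

lemma opt_le {n v : ℕ} {x : ℕ → ℕ} (h : IsRepr n c v x) :
    opt n c v ≤ ∑ i ∈ Finset.Icc 1 n, x i :=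
  Nat.sInf_le ⟨x, h, rfl⟩

lemma opt_nonempty {n : ℕ} (h1 : c 1 = 1) (hn : 1 ≤ n) (v : ℕ) :
    {k | ∃ x : ℕ → ℕ, IsRepr n c v x ∧ ∑ i ∈ Finset.Icc 1 n, x i = k}.Nonempty := by
  have hj : (1 : ℕ) ∈ Finset.Icc 1 n := Finset.mem_Icc.2 ⟨le_refl 1, hn⟩
  obtain ⟨hr, hc⟩ := isRepr_single c hj v
  rw [h1, one_mul] at hr
  exact ⟨v, _, hr, hc⟩

lemma opt_spec {n : ℕ} (h1 : c 1 = 1) (hn : 1 ≤ n) (v : ℕ) :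
    ∃ x : ℕ → ℕ, IsRepr n c v x ∧ ∑ i ∈ Finset.Icc 1 n, x i = opt n c v :=
  Nat.sInf_mem (opt_nonempty h1 hn v)

lemma opt_zero (n : ℕ) (c : ℕ → ℕ) : opt n c 0 = 0 := by
  have := opt_le (c := c) (by unfold IsRepr; simp : IsRepr n c 0 (fun _ => 0))
  simpa using this

lemma opt_pos {n v : ℕ} (h1 : c 1 = 1) (hn : 1 ≤ n) (hv : 0 < v) : 0 < opt n c v := by
  by_contra h
  obtain ⟨x, hx, hc⟩ := opt_spec h1 hn v
  have hc0 : ∑ i ∈ Finset.Icc 1 n, x i = 0 := by omega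
  have : ∀ i ∈ Finset.Icc 1 n, x i = 0 := by
    intro i hi
    exact (Finset.sum_eq_zero_iff).1 hc0 i hi
  have : ∑ i ∈ Finset.Icc 1 n, c i * x i = 0 :=
    Finset.sum_eq_zero fun i hi => by rw [this i hi, mul_zero]
  unfold IsRepr at hx
  omega

lemma opt_add {n : ℕ} (h1 : c 1 = 1) (hn : 1 ≤ n) (a b : ℕ) :
    opt n c (a + b) ≤ opt n c a + opt n c b := by
  obtain ⟨x, hx, hcx⟩ := opt_spec h1 hn a
  obtain ⟨y, hy, hcy⟩ := opt_spec h1 hn b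
  have hz : IsRepr n c (a + b) (fun i => x i + y i) := by
    unfold IsRepr at *
    have : ∀ i ∈ Finset.Icc 1 n, c i * (x i + y i) = c i * x i + c i * y i := by
      intro i _; ring
    rw [Finset.sum_congr rfl this, Finset.sum_add_distrib, hx, hy]
  have := opt_le hz
  rw [Finset.sum_add_distrib, hcx, hcy] at this
  exact this

lemma opt_coin {n j : ℕ} (hj : j ∈ Finset.Icc 1 n) : opt n c (c j) ≤ 1 := by
  obtain ⟨hr, hc⟩ := isRepr_single c hj 1
  rw [mul_one] at hr
  have := opt_le hr
  omega

lemma opt_le_grd {n : ℕ} (h1 : c 1 = 1) (hn : 1 ≤ n) :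
    ∀ v, opt n c v ≤ grd n c v := by
  intro v
  induction v using Nat.strong_induction_on with
  | _ v ih =>
    rcases Nat.eq_zero_or_pos v with hv | hv
    · subst hv; rw [grd_zero, opt_zero]
    · have h1m : (1 : ℕ) ∈ (Finset.Icc 1 n).filter (fun i => c i ≤ v) :=
        Finset.mem_filter.2 ⟨Finset.mem_Icc.2 ⟨le_refl 1, hn⟩, by omega⟩
      set m := ((Finset.Icc 1 n).filter (fun i => c i ≤ v)).sup c with hm
      have hmpos : 0 < m := by
        have := Finset.le_sup (f := c) h1m; omega
      have hmle : m ≤ v :=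
        Finset.sup_le fun i hi => (Finset.mem_filter.1 hi).2
      obtain ⟨j, hjf, hjm⟩ := Finset.exists_mem_eq_sup _ ⟨1, h1m⟩ c
      have hgv : grd n c v = grd n c (v - m) + 1 := by
        rw [grd_eq n c v (by omega), if_pos hmpos]
      have hsplit : v = (v - m) + m := by omega
      calc opt n c v = opt n c ((v - m) + m) := by rw [← hsplit]
        _ ≤ opt n c (v - m) + opt n c m := opt_add h1 hn _ _
        _ ≤ opt n c (v - m) + 1 := by
            have : opt n c m ≤ 1 := by
              rw [hm, hjm]; exact opt_coin (Finset.mem_filter.1 hjf).1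
            omega
        _ ≤ grd n c (v - m) + 1 := by
            have := ih (v - m) (by omega); omega
        _ = grd n c v := hgv.symm

lemma grd_le_one {n v : ℕ} (h1 : c 1 = 1) (hn : 1 ≤ n) (hv : 0 < v)
    (h : grd n c v ≤ 1) : ∃ j ∈ Finset.Icc 1 n, c j = v := by
  have h1m : (1 : ℕ) ∈ (Finset.Icc 1 n).filter (fun i => c i ≤ v) :=
    Finset.mem_filter.2 ⟨Finset.mem_Icc.2 ⟨le_refl 1, hn⟩, by omega⟩
  set m := ((Finset.Icc 1 n).filter (fun i => c i ≤ v)).sup c with hm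
  have hmpos : 0 < m := by
    have := Finset.le_sup (f := c) h1m; omega
  have hmle : m ≤ v := Finset.sup_le fun i hi => (Finset.mem_filter.1 hi).2
  have hgv : grd n c v = grd n c (v - m) + 1 := by
    rw [grd_eq n c v (by omega), if_pos hmpos]
  have hz : grd n c (v - m) = 0 := by omega
  have hvm : v - m = 0 := by
    by_contra hne
    have := grd_pos h1 hn (v := v - m) (by omega)
    omega
  obtain ⟨j, hjf, hjm⟩ := Finset.exists_mem_eq_sup _ ⟨1, h1m⟩ c
  exact ⟨j, (Finset.mem_filter.1 hjf).1, by omega⟩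

end CoinAux

namespace CoinAux2
open CoinAux
variable {c : ℕ → ℕ}

lemma filter_Icc6_eq {v : ℕ} (hv : ¬ c 6 ≤ v) :
    ((Finset.Icc 1 6).filter (fun i => c i ≤ v))
      = ((Finset.Icc 1 5).filter (fun i => c i ≤ v)) := by
  ext i
  simp only [Finset.mem_filter, Finset.mem_Icc]
  constructor
  · rintro ⟨⟨h1, h2⟩, h3⟩
    refine ⟨⟨h1, ?_⟩, h3⟩
    by_contra h
    have : i = 6 := by omega
    subst this; exact hv h3
  · rintro ⟨⟨h1, h2⟩, h3⟩
    exact ⟨⟨h1, by omega⟩, h3⟩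

lemma grd6_eq_grd5 {v : ℕ} (hlt : v < c 6) : grd 6 c v = grd 5 c v := by
  induction v using Nat.strong_induction_on with
  | _ v ih =>
    rcases Nat.eq_zero_or_pos v with hv | hv
    · subst hv; rw [grd_zero, grd_zero]
    · have hfe := filter_Icc6_eq (c := c) (v := v) (by omega)
      rw [grd_eq 6 c v (by omega), grd_eq 5 c v (by omega), hfe]
      set m := ((Finset.Icc 1 5).filter (fun i => c i ≤ v)).sup c with hm
      by_cases hmp : 0 < m
      · rw [if_pos hmp, if_pos hmp]
        have hmle : m ≤ v := Finset.sup_le fun i hi => (Finset.mem_filter.1 hi).2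
        rw [ih (v - m) (by omega) (by omega)]
      · rw [if_neg hmp, if_neg hmp]

lemma opt6_le_opt5 (h1 : c 1 = 1) (v : ℕ) : opt 6 c v ≤ opt 5 c v := by
  have h5 : (1:ℕ) ≤ 5 := by norm_num
  have hIcc : Finset.Icc 1 6 = Finset.Icc 1 (5+1) := rfl
  obtain ⟨x, hx, hxc⟩ := opt_spec h1 h5 v
  set x' : ℕ → ℕ := fun i => if i = 6 then 0 else x i with hx'
  have hxx : ∀ i ∈ Finset.Icc 1 5, x' i = x i := by
    intro i hi
    have : i ≠ 6 := by simp only [Finset.mem_Icc] at hi; omega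
    simp [hx', this]
  have hx6 : IsRepr 6 c v x' := by
    unfold IsRepr at *
    rw [hIcc, Finset.sum_Icc_succ_top (by norm_num : (1:ℕ) ≤ 5+1)]
    have heq : ∑ i ∈ Finset.Icc 1 5, c i * x' i = ∑ i ∈ Finset.Icc 1 5, c i * x i :=
      Finset.sum_congr rfl fun i hi => by rw [hxx i hi]
    have hx6' : x' 6 = 0 := by simp [hx']
    rw [hx6', mul_zero, add_zero, heq, hx]
  have := opt_le hx6
  have hcount : ∑ i ∈ Finset.Icc 1 6, x' i = opt 5 c v := by
    rw [hIcc, Finset.sum_Icc_succ_top (by norm_num : (1:ℕ) ≤ 5+1)]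
    have heq : ∑ i ∈ Finset.Icc 1 5, x' i = ∑ i ∈ Finset.Icc 1 5, x i :=
      Finset.sum_congr rfl fun i hi => by rw [hxx i hi]
    have hx6' : x' 6 = 0 := by simp [hx']
    rw [hx6', add_zero, heq, hxc]
  omega

lemma opt6_eq_opt5 (h1 : c 1 = 1) {v : ℕ} (hlt : v < c 6) :
    opt 5 c v = opt 6 c v := by
  have h6 : (1:ℕ) ≤ 6 := by norm_num
  have h5 : (1:ℕ) ≤ 5 := by norm_num
  have hIcc : Finset.Icc 1 6 = Finset.Icc 1 (5+1) := rfl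
  apply le_antisymm
  · obtain ⟨y, hy, hyc⟩ := opt_spec h1 h6 v
    have h6mem : (6:ℕ) ∈ Finset.Icc 1 6 := by simp
    have hy6 : y 6 = 0 := by
      by_contra h
      have h1le : 1 ≤ y 6 := by omega
      have : c 6 * y 6 ≤ v := by
        unfold IsRepr at hy
        rw [← hy]
        exact Finset.single_le_sum (f := fun i => c i * y i) (fun i _ => Nat.zero_le _) h6mem
      have : c 6 ≤ c 6 * y 6 := Nat.le_mul_of_pos_right _ h1le
      omega
    have hy5 : IsRepr 5 c v y := by
      unfold IsRepr at *
      rw [hIcc, Finset.sum_Icc_succ_top (by norm_num : (1:ℕ) ≤ 5+1)] at hy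
      simp only [hy6, mul_zero, add_zero] at hy
      exact hy
    have := opt_le hy5
    have hcount : ∑ i ∈ Finset.Icc 1 5, y i = opt 6 c v := by
      rw [hIcc, Finset.sum_Icc_succ_top (by norm_num : (1:ℕ) ≤ 5+1)] at hyc
      simp only [hy6, add_zero] at hyc
      exact hyc
    omega
  · exact opt6_le_opt5 h1 v

lemma grd5_small (h1 : c 1 = 1) (h2i : ∀ i, 2 ≤ i → i ≤ 5 → c 2 ≤ c i)
    {v : ℕ} (hv : v < c 2) : grd 5 c v = v := by
  induction v using Nat.strong_induction_on with
  | _ v ih =>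
    rcases Nat.eq_zero_or_pos v with h0 | h0
    · subst h0; rw [grd_zero]
    · have h1m : (1:ℕ) ∈ Finset.Icc 1 5 := by simp
      have hstep : grd 5 c v = grd 5 c (v - c 1) + 1 := by
        apply grd_step h1m (by omega) (by omega)
        intro i hi hci
        simp only [Finset.mem_Icc] at hi
        rcases Nat.eq_or_lt_of_le hi.1 with h | h
        · rw [← h]
        · have hc2i : c 2 ≤ c i := h2i i (by omega) hi.2
          omega
      rw [hstep, h1, ih (v - 1) (by omega) (by omega)]
      omega

lemma opt_two_coins (h1 : c 1 = 1) {n j k : ℕ} (hj : j ∈ Finset.Icc 1 n)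
    (hk : k ∈ Finset.Icc 1 n) : opt n c (c j + c k) ≤ 2 := by
  obtain ⟨hr, hc⟩ := isRepr_single c hj 1
  rw [mul_one] at hr
  obtain ⟨hr2, hc2⟩ := isRepr_addCoin hr hk
  have := opt_le hr2
  omega

end CoinAux2

open CoinAux CoinAux2 in
theorem c6_ne_two_c5_sub_c4 (c : ℕ → ℕ) (hsys : IsSystem 6 c)
    (hC : Canonical 6 c) (hC' : ¬ Canonical 5 c) :
    c 6 ≠ 2 * c 5 - c 4 := by
  intro heq
  obtain ⟨h1, hsm⟩ := hsys
  have hmem : ∀ i : ℕ, 1 ≤ i → i ≤ 6 → i ∈ Set.Icc (1:ℕ) 6 :=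
    fun i hi1 hi2 => Set.mem_Icc.2 ⟨hi1, hi2⟩
  have h12 : c 1 < c 2 := hsm (hmem 1 le_rfl (by norm_num)) (hmem 2 (by norm_num) (by norm_num)) (by norm_num)
  have h23 : c 2 < c 3 := hsm (hmem 2 (by norm_num) (by norm_num)) (hmem 3 (by norm_num) (by norm_num)) (by norm_num)
  have h34 : c 3 < c 4 := hsm (hmem 3 (by norm_num) (by norm_num)) (hmem 4 (by norm_num) (by norm_num)) (by norm_num)
  have h45 : c 4 < c 5 := hsm (hmem 4 (by norm_num) (by norm_num)) (hmem 5 (by norm_num) (by norm_num)) (by norm_num)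
  set d := c 5 - c 4 with hdd
  have hc6 : c 6 = c 5 + d := by omega
  have hd1 : 1 ≤ d := by omega
  have hc11 : c 1 = 1 := h1
  have h5mem : (5:ℕ) ∈ Finset.Icc 1 5 := by simp
  have h4mem : (4:ℕ) ∈ Finset.Icc 1 5 := by simp
  have h6mem6 : (6:ℕ) ∈ Finset.Icc 1 6 := by simp
  have h15 : (1:ℕ) ≤ 5 := by norm_num
  have h16 : (1:ℕ) ≤ 6 := by norm_num
  have gstep5 : ∀ v, c 5 ≤ v → grd 5 c v = grd 5 c (v - c 5) + 1 := by
    intro v hv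
    refine grd_step h5mem (by omega) hv ?_
    intro i hi _
    obtain ⟨hia, hib⟩ := Finset.mem_Icc.1 hi
    interval_cases i <;> omega
  have gstep6 : ∀ v, c 6 ≤ v → grd 6 c v = grd 6 c (v - c 6) + 1 := by
    intro v hv
    refine grd_step h6mem6 (by omega) hv ?_
    intro i hi _
    obtain ⟨hia, hib⟩ := Finset.mem_Icc.1 hi
    interval_cases i <;> omega
  have h2i : ∀ i, 2 ≤ i → i ≤ 5 → c 2 ≤ c i := by
    intro i hi2 hi5; interval_cases i <;> omega
  have holeg5 : ∀ v, opt 5 c v ≤ grd 5 c v := opt_le_grd h1 h15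
  -- minimal counterexample of the 5-system
  unfold Canonical at hC'
  push_neg at hC'
  obtain ⟨v₀, hv₀, hne₀⟩ := hC'
  have hWne : {v | IsCex 5 c v}.Nonempty :=
    ⟨v₀, hv₀, lt_of_le_of_ne (holeg5 v₀) hne₀⟩
  set w := sInf {v | IsCex 5 c v} with hwdef
  have hw : IsCex 5 c w := Nat.sInf_mem hWne
  have hwpos : 0 < w := hw.1
  have hwlt : opt 5 c w < grd 5 c w := hw.2
  have hmin : ∀ u, u < w → opt 5 c u = grd 5 c u := by
    intro u hu
    rcases Nat.eq_zero_or_pos u with h0 | h0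
    · subst h0; rw [opt_zero, grd_zero]
    by_contra hne
    have hcex : u ∈ {v | IsCex 5 c v} := ⟨h0, lt_of_le_of_ne (holeg5 u) hne⟩
    have hle := Nat.sInf_le hcex
    omega
  -- w ≥ c 6
  have hwc6 : c 6 ≤ w := by
    by_contra h
    have h5 := opt6_eq_opt5 h1 (show w < c 6 by omega)
    have h6' := grd6_eq_grd5 (c := c) (show w < c 6 by omega)
    have := hC w hwpos
    omega
  have hc5w : c 5 < w := by omega
  set r := w - c 5 with hrdef
  have hw5r : w = c 5 + r := by omega
  have hrd : d ≤ r := by omega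
  have hrpos : 0 < r := by omega
  have hgw : grd 5 c w = grd 5 c r + 1 := by
    have := gstep5 w (by omega)
    rwa [show w - c 5 = r by omega] at this
  have hkr : opt 5 c w ≤ grd 5 c r := by omega
  have hoptr : opt 5 c r = grd 5 c r := hmin r (by omega)
  have hkpos : 0 < opt 5 c w := opt_pos h1 h15 hwpos
  -- every optimal representation avoids the coin c 5
  have hx50 : ∀ x : ℕ → ℕ, IsRepr 5 c w x →
      (∑ i ∈ Finset.Icc 1 5, x i) = opt 5 c w → x 5 = 0 := by
    intro x hx hxc
    by_contra hne
    obtain ⟨hrep, hcnt, hcle⟩ := isRepr_remove hx h5mem (by omega)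
    have hle := opt_le hrep
    rw [show w - c 5 = r by omega] at hle
    have e2 : opt 5 c r = grd 5 c r := hoptr
    omega
  -- w < c 4 + c 5
  have hwlt45 : w < c 4 + c 5 := by
    by_contra hge
    push_neg at hge
    obtain ⟨x, hx, hxc⟩ := opt_spec h1 h15 w
    have hx5 := hx50 x hx hxc
    obtain ⟨i, hi, hxi⟩ := Finset.exists_ne_zero_of_sum_ne_zero
      (by rw [hxc]; omega : ∑ i ∈ Finset.Icc 1 5, x i ≠ 0)
    obtain ⟨hia, hib⟩ := Finset.mem_Icc.1 hi
    have hine5 : i ≠ 5 := fun h => hxi (h ▸ hx5)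
    have hci4 : c i ≤ c 4 := by interval_cases i <;> omega
    have hci1 : 1 ≤ c i := by interval_cases i <;> omega
    obtain ⟨hrem, hcnt, hciw⟩ := isRepr_remove hx hi (by omega)
    have e1 : opt 5 c (w - c i) ≤ opt 5 c w - 1 := by
      have := opt_le hrem; omega
    have e2 : opt 5 c w ≤ opt 5 c (w - c i) + 1 := by
      have ha := opt_add h1 h15 (w - c i) (c i)
      have hb := opt_coin (c := c) hi
      rw [show w - c i + c i = w by omega] at ha
      omega
    have e3 : opt 5 c (w - c i) = grd 5 c (w - c i) := hmin _ (by omega)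
    have e4 : grd 5 c (w - c i) = grd 5 c (w - c i - c 5) + 1 := gstep5 _ (by omega)
    have e5 : opt 5 c (w - c i - c 5) = grd 5 c (w - c i - c 5) := hmin _ (by omega)
    have e6 : opt 5 c (w - c 5) ≤ opt 5 c (c i) + opt 5 c (w - c 5 - c i) := by
      have := opt_add h1 h15 (c i) (w - c 5 - c i)
      rwa [show c i + (w - c 5 - c i) = w - c 5 by omega] at this
    have e7 : opt 5 c (w - c 5) = grd 5 c (w - c 5) := hmin _ (by omega)
    have e8 : grd 5 c w = grd 5 c (w - c 5) + 1 := gstep5 _ (by omega)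
    have e9 : opt 5 c (c i) ≤ 1 := opt_coin hi
    rw [show w - c i - c 5 = w - c 5 - c i by omega] at e4 e5
    omega
  have hrc4 : r < c 4 := by omega
  -- greedy of the 6-system at w + d
  have hgr6 : grd 6 c r = grd 5 c r := grd6_eq_grd5 (by omega)
  have hopt6wd : opt 6 c (w + d) = grd 5 c r + 1 := by
    have hstep := gstep6 (w + d) (by omega)
    rw [show w + d - c 6 = r by omega, hgr6] at hstep
    rw [← hstep]
    exact hC (w + d) (by omega)
  -- the optimal representation of w
  obtain ⟨x, hx, hxc⟩ := opt_spec h1 h15 w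
  have hx5 := hx50 x hx hxc
  -- Case A : some used coin is ≤ r
  by_cases hA : ∃ i ∈ Finset.Icc 1 5, x i ≠ 0 ∧ c i ≤ r
  · obtain ⟨i, hi, hxi, hcir⟩ := hA
    obtain ⟨hia, hib⟩ := Finset.mem_Icc.1 hi
    have hci1 : 1 ≤ c i := by interval_cases i <;> omega
    obtain ⟨hrem, hcnt, hciw⟩ := isRepr_remove hx hi (by omega)
    have e1 : opt 5 c (w - c i) ≤ opt 5 c w - 1 := by
      have := opt_le hrem; omega
    have e2 : opt 5 c w ≤ opt 5 c (w - c i) + 1 := by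
      have ha := opt_add h1 h15 (w - c i) (c i)
      have hb := opt_coin (c := c) hi
      rw [show w - c i + c i = w by omega] at ha
      omega
    have e3 : opt 5 c (w - c i) = grd 5 c (w - c i) := hmin _ (by omega)
    have e4 : grd 5 c (w - c i) = grd 5 c (w - c i - c 5) + 1 := gstep5 _ (by omega)
    have e5 : opt 5 c (w - c i - c 5) = grd 5 c (w - c i - c 5) := hmin _ (by omega)
    have e6 : opt 5 c r ≤ opt 5 c (c i) + opt 5 c (r - c i) := by
      have := opt_add h1 h15 (c i) (r - c i)
      rwa [show c i + (r - c i) = r by omega] at this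
    have e9 : opt 5 c (c i) ≤ 1 := opt_coin hi
    rw [show w - c i - c 5 = r - c i by omega] at e4 e5
    omega
  push_neg at hA
  -- Case B : the coin c 4 is used
  by_cases hB : x 4 ≠ 0
  · obtain ⟨hrem, hcnt, hc4w⟩ := isRepr_remove hx h4mem (by omega)
    obtain ⟨hadd, hcadd⟩ := isRepr_addCoin hrem h5mem
    rw [show w - c 4 + c 5 = w + d by omega] at hadd
    have hle := opt_le hadd
    have h65 := opt6_le_opt5 h1 (w + d)
    omega
  -- Case C : some used coin is in (r, r + d]
  by_cases hCc : ∃ i ∈ Finset.Icc 1 5, x i ≠ 0 ∧ c i ≤ r + d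
  · obtain ⟨i, hi, hxi, hcird⟩ := hCc
    have hrci : r < c i := hA i hi hxi
    obtain ⟨hia, hib⟩ := Finset.mem_Icc.1 hi
    obtain ⟨hrem, hcnt, hciw⟩ := isRepr_remove hx hi (by omega)
    have e1 : opt 5 c (w - c i) ≤ opt 5 c w - 1 := by
      have := opt_le hrem; omega
    have e2 : opt 5 c w ≤ opt 5 c (w - c i) + 1 := by
      have ha := opt_add h1 h15 (w - c i) (c i)
      have hb := opt_coin (c := c) hi
      rw [show w - c i + c i = w by omega] at ha
      omega
    have e3 : opt 5 c (w - c i) = grd 5 c (w - c i) := hmin _ (by omega)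
    have e4 : grd 5 c (w - c i) = grd 5 c (w - c i - c 4) + 1 := by
      refine grd_step h4mem (by omega) (by omega) ?_
      intro i' hi' hle'
      obtain ⟨hi'a, hi'b⟩ := Finset.mem_Icc.1 hi'
      have hwci : w - c i < c 5 := by omega
      interval_cases i' <;> omega
    have e5 : opt 5 c (w - c i - c 4) = grd 5 c (w - c i - c 4) := hmin _ (by omega)
    obtain ⟨z, hz, hzc⟩ := opt_spec h1 h15 (w - c i - c 4)
    obtain ⟨hz5, hzc5⟩ := isRepr_addCoin hz h5mem
    obtain ⟨hz5i, hzc5i⟩ := isRepr_addCoin hz5 hi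
    rw [show w - c i - c 4 + c 5 + c i = w + d by omega] at hz5i
    have hle := opt_le hz5i
    have h65 := opt6_le_opt5 h1 (w + d)
    omega
  -- Case D : all used coins exceed r + d
  push_neg at hCc
  have hx4 : x 4 = 0 := by by_contra h; exact hB h
  have hx1 : x 1 = 0 := by
    by_contra h
    have := hCc 1 (by simp) h
    omega
  have hC1 : ∀ j, j = 2 ∨ j = 3 → x j ≠ 0 →
      ∃ j' ∈ Finset.Icc 1 5, c j' = c j - d := by
    intro j hj hxj
    have hjmem : j ∈ Finset.Icc 1 5 := by rcases hj with h | h <;> simp [h]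
    have hjd : r + d < c j := hCc j hjmem hxj
    have hj6 : j ∈ Finset.Icc 1 6 := by rcases hj with h | h <;> simp [h]
    have h5m6 : (5:ℕ) ∈ Finset.Icc 1 6 := by simp
    have hob := opt_two_coins h1 hj6 h5m6
    have hgd := hC (c j + c 5) (by omega)
    have hstep := gstep6 (c j + c 5) (by omega)
    rw [show c j + c 5 - c 6 = c j - d by omega] at hstep
    have hjc3 : c j ≤ c 3 := by rcases hj with h | h <;> subst h <;> omega
    have hg65 : grd 6 c (c j - d) = grd 5 c (c j - d) := grd6_eq_grd5 (by omega)
    exact grd_le_one h1 h15 (by omega) (by omega)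
  have hx2 : x 2 = 0 := by
    by_contra h
    obtain ⟨j', hj', hcj'⟩ := hC1 2 (Or.inl rfl) h
    obtain ⟨hj'a, hj'b⟩ := Finset.mem_Icc.1 hj'
    have h2d : r + d < c 2 := hCc 2 (by simp) h
    interval_cases j' <;> omega
  have hx3 : x 3 ≠ 0 := by
    by_contra h
    have hz : ∑ i ∈ Finset.Icc 1 5, x i = 0 := by
      apply Finset.sum_eq_zero
      intro i hi
      obtain ⟨hia, hib⟩ := Finset.mem_Icc.1 hi
      interval_cases i <;> omega
    omega
  have hsum3 : ∑ i ∈ Finset.Icc 1 5, x i = x 3 := by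
    refine Finset.sum_eq_single_of_mem 3 (by simp) ?_
    intro i hi hne
    obtain ⟨hia, hib⟩ := Finset.mem_Icc.1 hi
    interval_cases i
    · exact hx1
    · exact hx2
    · exact absurd rfl hne
    · exact hx4
    · exact hx5
  have hval3 : c 3 * x 3 = w := by
    have hs : ∑ i ∈ Finset.Icc 1 5, c i * x i = c 3 * x 3 := by
      refine Finset.sum_eq_single_of_mem 3 (by simp) ?_
      intro i hi hne
      obtain ⟨hia, hib⟩ := Finset.mem_Icc.1 hi
      interval_cases i
      · rw [hx1, mul_zero]
      · rw [hx2, mul_zero]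
      · exact absurd rfl hne
      · rw [hx4, mul_zero]
      · rw [hx5, mul_zero]
    unfold IsRepr at hx
    omega
  obtain ⟨j', hj', hcj'⟩ := hC1 3 (Or.inr rfl) hx3
  have h3d : r + d < c 3 := hCc 3 (by simp) hx3
  have hc32 : c 3 = c 2 + d := by
    obtain ⟨hj'a, hj'b⟩ := Finset.mem_Icc.1 hj'
    interval_cases j' <;> omega
  have hc2r : r < c 2 := by omega
  have hc2d : c 2 = d + 1 := by
    have h3m6 : (3:ℕ) ∈ Finset.Icc 1 6 := by simp
    have h4m6 : (4:ℕ) ∈ Finset.Icc 1 6 := by simp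
    have hob := opt_two_coins h1 h3m6 h4m6
    have hgd := hC (c 3 + c 4) (by omega)
    have hstep := gstep6 (c 3 + c 4) (by omega)
    rw [show c 3 + c 4 - c 6 = c 2 - d by omega] at hstep
    have hg65 : grd 6 c (c 2 - d) = grd 5 c (c 2 - d) := grd6_eq_grd5 (by omega)
    obtain ⟨j'', hj'', hcj''⟩ := grd_le_one h1 h15 (by omega : 0 < c 2 - d) (by omega)
    obtain ⟨hj''a, hj''b⟩ := Finset.mem_Icc.1 hj''
    interval_cases j'' <;> omega
  have hrd2 : r = d := by omega
  have hc3v : c 3 = 2 * d + 1 := by omega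
  have hgr_small : grd 5 c r = r := grd5_small h1 h2i (by omega)
  have hk2 : 2 ≤ x 3 := by
    by_contra h
    have hx31 : c 3 * x 3 ≤ c 3 * 1 := Nat.mul_le_mul_left _ (by omega)
    omega
  have hbranch : w = 4 * d + 2 ∨ 6 * d + 3 ≤ w := by
    rcases Nat.eq_or_lt_of_le hk2 with h | h
    · left
      have : c 3 * x 3 = c 3 * 2 := by rw [← h]
      omega
    · right
      have : c 3 * 3 ≤ c 3 * x 3 := Nat.mul_le_mul_left _ (by omega)
      omega
  have hd2 : 2 ≤ d := by omega
  -- the value 2 * c 4 kills canonicity of the 6-system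
  have h4m6 : (4:ℕ) ∈ Finset.Icc 1 6 := by simp
  obtain ⟨hr2, hcnt2⟩ := isRepr_single c h4m6 2
  have hopt2 : opt 6 c (c 4 * 2) ≤ 2 := by
    have := opt_le hr2
    omega
  have hgd := hC (c 4 * 2) (by omega)
  have hstep := gstep6 (c 4 * 2) (by omega)
  rw [show c 4 * 2 - c 6 = w - 4 * d by omega] at hstep
  have hg65 : grd 6 c (w - 4 * d) = grd 5 c (w - 4 * d) := grd6_eq_grd5 (by omega)
  have hge2 : 2 ≤ grd 5 c (w - 4 * d) := by
    by_contra h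
    obtain ⟨j3, hj3, hcj3⟩ := grd_le_one h1 h15 (by omega : 0 < w - 4 * d) (by omega)
    obtain ⟨hj3a, hj3b⟩ := Finset.mem_Icc.1 hj3
    interval_cases j3 <;> omega
  omega
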